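/- Let (X, d) be a metric space, μ a probability measure, and {P_t} a family of Markov operators on bounded measurable functions satisfying the Wang Harnack inequality: for all bounded measurable f ≥ 0, p > 1, t > 0 and x, y ∈ X, (P_t f(x))^p ≤ P_t(f^p)(y) · exp(p K d(x,y)²/(2(p-1)(1 − e^{-2Kt}))) for some K ≥ 0. Suppose also ∫ P_t f dμ = ∫ f dμ for all t and bounded f, and μ(B(o,1)) > 0 for some o ∈ X. Then for every p > 2, every f ≥ 0 with ∫ f^p dμ = 1, every t > 0 and x ∈ X, P_t f(x) ≤ μ(B(o,1))^{-1/p} · exp(K(d(o,x)+1)²/(2(p-1)(1 − e^{-2Kt}))). -/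

import Mathlib

open Real MeasureTheory

theorem stmt_7 {X : Type*} [MetricSpace X] [MeasurableSpace X] [BorelSpace X]
    (μ : Measure X) [IsProbabilityMeasure μ]
    (P : ℝ → (X → ℝ) → (X → ℝ)) (K : ℝ) (hK : 0 ≤ K)
    (harnack : ∀ f : X → ℝ, Measurable f → (∃ M : ℝ, ∀ z, |f z| ≤ M) →
      (∀ z, 0 ≤ f z) → ∀ p : ℝ, 1 < p → ∀ t : ℝ, 0 < t → ∀ x y : X,
        (P t f x) ^ p ≤ P t (fun z => (f z) ^ p) y *
          Real.exp (p * K * (dist x y) ^ 2 / (2 * (p - 1) * (1 - Real.exp (-2 * K * t)))))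
    (hmass : ∀ t : ℝ, ∀ f : X → ℝ, Measurable f → (∃ M : ℝ, ∀ z, |f z| ≤ M) →
      ∫ z, P t f z ∂μ = ∫ z, f z ∂μ)
    (o : X) (ho : 0 < μ (Metric.ball o 1)) :
    ∀ p : ℝ, 2 < p → ∀ f : X → ℝ, Measurable f → (∃ M : ℝ, ∀ z, |f z| ≤ M) →
      (∀ z, 0 ≤ f z) → (∫ z, (f z) ^ p ∂μ = 1) → ∀ t : ℝ, 0 < t → ∀ x : X,
        P t f x ≤ (μ (Metric.ball o 1)).toReal ^ (-(1 / p)) *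
          Real.exp (K * (dist o x + 1) ^ 2 / (2 * (p - 1) * (1 - Real.exp (-2 * K * t)))) := by
  intro p hp f hf hbdd hf0 hfp t ht x
  obtain ⟨M, hM⟩ := hbdd
  have hp1 : (1:ℝ) < p := by linarith
  have hp0 : (0:ℝ) < p := by linarith
  set D : ℝ := 2 * (p - 1) * (1 - Real.exp (-2 * K * t)) with hD
  have hD0 : 0 ≤ D := by
    have h1 : Real.exp (-2 * K * t) ≤ 1 := by
      rw [← Real.exp_zero]
      apply Real.exp_le_exp.mpr
      nlinarith
    nlinarith
  set g : X → ℝ := fun z => f z ^ p with hg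
  have hgmeas : Measurable g := (Real.continuous_rpow_const hp0.le).measurable.comp hf
  have hM0 : ∀ z, f z ≤ max M 0 :=
    fun z => le_trans (le_abs_self _) (le_max_of_le_left (hM z))
  have hgbdd : ∃ M', ∀ z, |g z| ≤ M' := by
    refine ⟨(max M 0) ^ p, fun z => ?_⟩
    rw [abs_of_nonneg (Real.rpow_nonneg (hf0 z) p)]
    exact Real.rpow_le_rpow (hf0 z) (hM0 z) hp0.le
  -- nonnegativity of P t g
  have hgnn : ∀ y, 0 ≤ P t g y := by
    intro y
    set g2 : X → ℝ := fun z => f z ^ (p/2) with hg2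
    have h2meas : Measurable g2 := (Real.continuous_rpow_const (by positivity)).measurable.comp hf
    have h2bdd : ∃ M', ∀ z, |g2 z| ≤ M' := by
      refine ⟨(max M 0) ^ (p/2), fun z => ?_⟩
      rw [abs_of_nonneg (Real.rpow_nonneg (hf0 z) _)]
      exact Real.rpow_le_rpow (hf0 z) (hM0 z) (by positivity)
    have h2nn : ∀ z, 0 ≤ g2 z := fun z => Real.rpow_nonneg (hf0 z) _
    have h2 := harnack g2 h2meas h2bdd h2nn 2 one_lt_two t ht x y
    have hfun : (fun z => g2 z ^ (2:ℝ)) = g := by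
      funext z
      show (f z ^ (p/2)) ^ (2:ℝ) = f z ^ p
      rw [← Real.rpow_mul (hf0 z), div_mul_cancel₀ p (two_ne_zero)]
    rw [hfun] at h2
    have hsq : 0 ≤ (P t g2 x) ^ (2:ℝ) := by
      rw [show (2:ℝ) = ((2:ℕ):ℝ) by norm_num, Real.rpow_natCast]
      positivity
    have h3 := le_trans hsq h2
    exact (mul_nonneg_iff_of_pos_right (Real.exp_pos _)).mp h3
  have hmB : MeasurableSet (Metric.ball o 1) := measurableSet_ball
  have hμB : μ (Metric.ball o 1) ≠ ⊤ := measure_ne_top μ _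
  set m := (μ (Metric.ball o 1)).toReal with hm
  have hm0 : 0 < m := ENNReal.toReal_pos ho.ne' hμB
  set A : ℝ := dist o x + 1 with hA
  set C : ℝ := Real.exp (p * K * A ^ 2 / D) with hC
  have hCpos : 0 < C := Real.exp_pos _
  have key : ∀ y ∈ Metric.ball o 1, (P t f x) ^ p / C ≤ P t g y := by
    intro y hy
    have hdy : dist x y ≤ A := by
      have h1 : dist y o < 1 := Metric.mem_ball.mp hy
      have h2 : dist x y ≤ dist x o + dist o y := dist_triangle x o y
      rw [dist_comm x o] at h2
      rw [dist_comm o y] at h2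
      rw [hA]; linarith
    have h1 := harnack f hf ⟨M, hM⟩ hf0 p hp1 t ht x y
    rw [← hD] at h1
    have hle : Real.exp (p * K * dist x y ^ 2 / D) ≤ C := by
      apply Real.exp_le_exp.mpr
      rw [div_eq_mul_inv, div_eq_mul_inv]
      apply mul_le_mul_of_nonneg_right _ (inv_nonneg.mpr hD0)
      have hd0 : (0:ℝ) ≤ dist x y := dist_nonneg
      exact mul_le_mul_of_nonneg_left (pow_le_pow_left₀ hd0 hdy 2) (mul_nonneg hp0.le hK)
    have h2 : (P t f x) ^ p ≤ P t g y * C :=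
      h1.trans (mul_le_mul_of_nonneg_left hle (hgnn y))
    exact (div_le_iff₀ hCpos).mpr h2
  have hI : ∫ z, P t g z ∂μ = 1 := by
    rw [hmass t g hgmeas hgbdd]; exact hfp
  have hint : Integrable (P t g) μ := by
    by_contra h
    rw [integral_undef h] at hI
    norm_num at hI
  have h3 : ((P t f x) ^ p / C) * m ≤ ∫ z in Metric.ball o 1, P t g z ∂μ :=
    setIntegral_ge_of_const_le_real hmB hμB key hint.integrableOn
  have h4 : ∫ z in Metric.ball o 1, P t g z ∂μ ≤ ∫ z, P t g z ∂μ :=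
    setIntegral_le_integral hint (Filter.Eventually.of_forall hgnn)
  have h5 : (P t f x) ^ p ≤ C / m := by
    have h6 : ((P t f x) ^ p / C) * m ≤ 1 := le_trans h3 (h4.trans_eq hI)
    rw [le_div_iff₀ hm0]
    rw [div_mul_eq_mul_div] at h6
    exact (div_le_one hCpos).mp h6
  rcases le_or_gt (P t f x) 0 with hPx | hPx
  · refine hPx.trans (le_of_lt ?_)
    positivity
  · have h7 : P t f x = ((P t f x) ^ p) ^ (1/p) := by
      rw [← Real.rpow_mul hPx.le, mul_one_div_cancel hp0.ne', Real.rpow_one]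
    have h8 : ((P t f x) ^ p) ^ (1/p) ≤ (C / m) ^ (1/p) :=
      Real.rpow_le_rpow (Real.rpow_nonneg hPx.le p) h5 (by positivity)
    have hexp : C ^ (1/p) = Real.exp (K * A ^ 2 / D) := by
      rw [hC, ← Real.exp_mul]
      congr 1
      rw [mul_one_div, div_div, mul_comm D p,
        show p * K * A ^ 2 = p * (K * A ^ 2) by ring, mul_div_mul_left _ _ hp0.ne']
    have h9 : (C / m) ^ (1/p) = m ^ (-(1/p)) * Real.exp (K * A ^ 2 / D) := by
      rw [Real.div_rpow hCpos.le hm0.le, Real.rpow_neg hm0.le, hexp]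
      ring
    rw [h9] at h8
    exact h7.le.trans h8
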